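/- Every non-negative integer has at least one Chung-Graham representation: there exists a finitely supported sequence (a_i) with a_i ∈ {0,1,2}, a_i = 0 for odd i, and between any two even indices with digit 2 there is an even index with digit 0, such that n = ∑ a_i F_{i+2}. -/
import Mathlib


/-- The value represented by a finitely supported digit sequence:
    `∑ i, a i * F (i+2)` where `F` is the Fibonacci sequence. -/
def fibVal (a : ℕ →₀ ℕ) : ℕ := a.sum fun i c => c * Nat.fib (i + 2)

/-- Zeckendorf conditions: binary digits with no two consecutive 1's. -/
def IsZeckendorf (a : ℕ →₀ ℕ) : Prop :=
  (∀ i, a i ≤ 1) ∧ (∀ i, a i * a (i + 1) = 0)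

/-- Chung-Graham conditions: digits in {0,1,2}, zero at odd indices, and
    between any two even indices carrying digit 2 there is an even index
    carrying digit 0. -/
def IsChungGraham (a : ℕ →₀ ℕ) : Prop :=
  (∀ i, a i ≤ 2) ∧ (∀ i, Odd i → a i = 0) ∧
  (∀ i j, Even i → Even j → i < j → a i = 2 → a j = 2 →
    ∃ k, Even k ∧ i < k ∧ k < j ∧ a k = 0)

/-- The `cgsplit` rule: digit 0 ↦ (0,0), 1 ↦ (0,1), 2 ↦ (1,1). -/
def IsSplit (a b c : ℕ →₀ ℕ) : Prop :=
  ∀ i, (a i = 0 → b i = 0 ∧ c i = 0) ∧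
       (a i = 1 → b i = 0 ∧ c i = 1) ∧
       (a i = 2 → b i = 1 ∧ c i = 1)

lemma fibVal_add (a b : ℕ →₀ ℕ) : fibVal (a + b) = fibVal a + fibVal b := by
  unfold fibVal
  exact Finsupp.sum_add_index' (fun i => by simp) (fun i b₁ b₂ => add_mul _ _ _)

lemma fibVal_single (i c : ℕ) : fibVal (Finsupp.single i c) = c * Nat.fib (i + 2) := by
  unfold fibVal
  exact Finsupp.sum_single_index (by simp)

lemma self_lt_fib (n : ℕ) : n < Nat.fib (2 * n + 2) := by
  induction n with
  | zero => simp
  | succ k ih =>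
    have h1 : 1 ≤ Nat.fib (2 * k + 3) := Nat.fib_pos.mpr (by omega)
    have h2 : Nat.fib (2 * (k+1) + 2) = Nat.fib (2 * k + 3) + Nat.fib (2 * k + 2) := by
      rw [show 2 * (k+1) + 2 = (2 * k + 2) + 2 from by ring, Nat.fib_add_two,
        show 2 * k + 2 + 1 = 2 * k + 3 from by ring]
      omega
    omega

lemma key (m : ℕ) : ∀ n, n < Nat.fib (2 * m + 2) →
    ∃ a : ℕ →₀ ℕ, IsChungGraham a ∧ fibVal a = n ∧ (∀ i, 2 * m ≤ i → a i = 0) ∧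
      (n < Nat.fib (2 * m + 1) → ∀ i, a i = 2 →
        ∃ k, Even k ∧ i < k ∧ k < 2 * m ∧ a k = 0) := by
  induction m with
  | zero =>
    intro n hn
    have hn0 : n = 0 := by simpa using hn
    refine ⟨0, ⟨fun i => by simp, fun i _ => by simp, fun i j _ _ _ h2 => by simp at h2⟩,
      ?_, fun i _ => by simp, fun _ i h2 => by simp at h2⟩
    simp [fibVal, hn0]
  | succ m ih =>
    intro n hn
    -- Fibonacci recurrences
    have e4 : Nat.fib (2 * (m+1) + 2) = Nat.fib (2 * m + 3) + Nat.fib (2 * m + 2) := by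
      rw [show 2 * (m+1) + 2 = (2 * m + 2) + 2 from by ring, Nat.fib_add_two,
        show 2 * m + 2 + 1 = 2 * m + 3 from by ring]
      omega
    have e3 : Nat.fib (2 * m + 3) = Nat.fib (2 * m + 2) + Nat.fib (2 * m + 1) := by
      rw [show 2 * m + 3 = (2 * m + 1) + 2 from by ring, Nat.fib_add_two,
        show 2 * m + 1 + 1 = 2 * m + 2 from by ring]
      omega
    have e3' : Nat.fib (2 * (m+1) + 1) = Nat.fib (2 * m + 3) := by ring_nf
    have hmono : Nat.fib (2 * m + 1) ≤ Nat.fib (2 * m + 2) := Nat.fib_mono (by omega)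
    rcases lt_or_ge n (Nat.fib (2 * m + 2)) with h1 | h1
    · -- Case A: top digit 0, reuse b
      obtain ⟨b, hbCG, hbval, hbsupp, _⟩ := ih n h1
      refine ⟨b, hbCG, hbval, fun i hi => hbsupp i (by omega), fun _ i h2 => ?_⟩
      have hilt : i < 2 * m := by
        by_contra h
        rw [hbsupp i (by omega)] at h2; exact absurd h2 (by norm_num)
      exact ⟨2 * m, ⟨m, by ring⟩, hilt, by omega, hbsupp (2 * m) le_rfl⟩
    · rcases lt_or_ge n (2 * Nat.fib (2 * m + 2)) with h2 | h2
      · -- Case B: top digit 1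
        obtain ⟨b, hbCG, hbval, hbsupp, hbsafe⟩ := ih (n - Nat.fib (2 * m + 2)) (by omega)
        obtain ⟨hb2, hbodd, hbpair⟩ := hbCG
        set a : ℕ →₀ ℕ := b + Finsupp.single (2 * m) 1 with ha
        have haeval : ∀ i, a i = b i + if i = 2 * m then 1 else 0 := by
          intro i; simp [ha, Finsupp.single_apply, eq_comm]
        have hane : ∀ i, i ≠ 2 * m → a i = b i := by
          intro i hi; rw [haeval i, if_neg hi, add_zero]
        refine ⟨a, ⟨?_, ?_, ?_⟩, ?_, ?_, ?_⟩
        · intro i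
          rcases eq_or_ne i (2 * m) with rfl | hne
          · rw [haeval, if_pos rfl, hbsupp _ le_rfl]; omega
          · rw [hane i hne]; exact hb2 i
        · intro i hodd
          have hne : i ≠ 2 * m := by rintro rfl; exact (Nat.not_odd_iff_even.mpr ⟨m, by ring⟩) hodd
          rw [hane i hne]; exact hbodd i hodd
        · intro i j hei hej hij hai haj
          have hine : i ≠ 2 * m := by
            rintro rfl; rw [haeval, if_pos rfl, hbsupp _ le_rfl] at hai; omega
          have hjne : j ≠ 2 * m := by
            rintro rfl; rw [haeval, if_pos rfl, hbsupp _ le_rfl] at haj; omega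
          rw [hane i hine] at hai; rw [hane j hjne] at haj
          obtain ⟨k, hek, hik, hkj, hk0⟩ := hbpair i j hei hej hij hai haj
          have hjlt : j < 2 * m := by
            by_contra h; rw [hbsupp j (by omega)] at haj; omega
          exact ⟨k, hek, hik, hkj, by rw [hane k (by omega)]; exact hk0⟩
        · rw [ha, fibVal_add, fibVal_single, hbval, one_mul,
            show 2 * m + 2 = 2 * m + 2 from rfl]
          omega
        · intro i hi
          rw [hane i (by omega), hbsupp i (by omega)]
        · intro hsmall i hai
          have hr : n - Nat.fib (2 * m + 2) < Nat.fib (2 * m + 1) := by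
            rw [e3'] at hsmall; omega
          have hine : i ≠ 2 * m := by
            rintro rfl; rw [haeval, if_pos rfl, hbsupp _ le_rfl] at hai; omega
          rw [hane i hine] at hai
          obtain ⟨k, hek, hik, hklt, hk0⟩ := hbsafe hr i hai
          exact ⟨k, hek, hik, by omega, by rw [hane k (by omega)]; exact hk0⟩
      · -- Case C: top digit 2
        have hr : n - 2 * Nat.fib (2 * m + 2) < Nat.fib (2 * m + 1) := by omega
        obtain ⟨b, hbCG, hbval, hbsupp, hbsafe⟩ := ih (n - 2 * Nat.fib (2 * m + 2)) (by omega)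
        obtain ⟨hb2, hbodd, hbpair⟩ := hbCG
        have hsafe := hbsafe hr
        set a : ℕ →₀ ℕ := b + Finsupp.single (2 * m) 2 with ha
        have haeval : ∀ i, a i = b i + if i = 2 * m then 2 else 0 := by
          intro i; simp [ha, Finsupp.single_apply, eq_comm]
        have hane : ∀ i, i ≠ 2 * m → a i = b i := by
          intro i hi; rw [haeval i, if_neg hi, add_zero]
        refine ⟨a, ⟨?_, ?_, ?_⟩, ?_, ?_, ?_⟩
        · intro i
          rcases eq_or_ne i (2 * m) with rfl | hne
          · rw [haeval, if_pos rfl, hbsupp _ le_rfl]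
          · rw [hane i hne]; exact hb2 i
        · intro i hodd
          have hne : i ≠ 2 * m := by rintro rfl; exact (Nat.not_odd_iff_even.mpr ⟨m, by ring⟩) hodd
          rw [hane i hne]; exact hbodd i hodd
        · intro i j hei hej hij hai haj
          have hine : i ≠ 2 * m := by
            rintro rfl
            have : j ≠ 2 * m := by omega
            rw [hane j this, hbsupp j (by omega)] at haj; omega
          rw [hane i hine] at hai
          rcases eq_or_ne j (2 * m) with rfl | hjne
          · obtain ⟨k, hek, hik, hklt, hk0⟩ := hsafe i hai
            exact ⟨k, hek, hik, hklt, by rw [hane k (by omega)]; exact hk0⟩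
          · rw [hane j hjne] at haj
            obtain ⟨k, hek, hik, hkj, hk0⟩ := hbpair i j hei hej hij hai haj
            have hjlt : j < 2 * m := by
              by_contra h; rw [hbsupp j (by omega)] at haj; omega
            exact ⟨k, hek, hik, hkj, by rw [hane k (by omega)]; exact hk0⟩
        · rw [ha, fibVal_add, fibVal_single, hbval]
          omega
        · intro i hi
          rw [hane i (by omega), hbsupp i (by omega)]
        · intro hsmall
          exfalso
          rw [e3'] at hsmall
          omega

theorem chung_graham_exists (n : ℕ) :
    ∃ a : ℕ →₀ ℕ, IsChungGraham a ∧ fibVal a = n := by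
  obtain ⟨a, hCG, hval, -, -⟩ := key n n (self_lt_fib n)
  exact ⟨a, hCG, hval⟩
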